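/- Let m be a positive integer and let u ∈ ℝ^m be a vector whose coordinates satisfy 0 ≤ u^(1) ≤ u^(2) ≤ … ≤ u^(m). Let e_1,…,e_m denote the standard basis vectors of ℝ^m. Put u_{−1} = −e_1, u_0 = e_1, u_i = −e_i + e_{i+1} for 1 ≤ i ≤ m−1, and u_m = −e_m. Let Λ ⊆ {−1, 0, 1, …, m}. Suppose that λu + Σ_{i∈Λ} λ_i u_i = (1,1,…,1) for some non-negative real number λ and some positive real numbers λ_i (i ∈ Λ). Then there exist indices 0 ≤ p ≤ q ≤ m such that u^(p+1) = u^(p+2) = … = u^(q) (i.e. all coordinates of u with indices strictly between p and q+1 are equal) and {0, 1, …, p−1} ∪ {q+1, …, m} ⊆ Λ. -/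

import Mathlib

/-- The vectors `u_{-1} = -e_1`, `u_0 = e_1`, `u_i = -e_i + e_{i+1}`
(for `1 ≤ i ≤ m-1`) and `u_m = -e_m` of Lemma "go-up", given by their
(1-based) coordinates: `uvecUp m i j` is the `j`-th coordinate of `u_i`. -/
noncomputable def uvecUp (m : ℕ) (i : ℤ) : ℕ → ℝ := fun j =>
  if i = -1 then (if j = 1 then -1 else 0)
  else if i = 0 then (if j = 1 then 1 else 0)
  else if i = (m : ℤ) then (if j = m then -1 else 0)
  else (if (j : ℤ) = i then -1 else 0) + (if (j : ℤ) = i + 1 then 1 else 0)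

/-- Lemma "go-up".  A vector `v ∈ ℝ^m` is encoded by
`v : ℕ → ℝ`, its coordinates being `v 1, …, v m` (values outside `[1, m]`
are irrelevant: all hypotheses and conclusions only concern `1 ≤ j ≤ m`).
Let `0 ≤ u^(1) ≤ … ≤ u^(m)`, let `Λ ⊆ {-1, 0, …, m}`, and suppose
`λ u + Σ_{i ∈ Λ} λ_i u_i = (1, …, 1)` with `λ ≥ 0` and `λ_i > 0` for `i ∈ Λ`.
Then there exist indices `0 ≤ p ≤ q ≤ m` such that
`u^(p+1) = … = u^(q)` and `{0, …, p-1} ∪ {q+1, …, m} ⊆ Λ`. -/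
theorem stmt_5 (m : ℕ) (hm : 0 < m) (u : ℕ → ℝ)
    (h0 : 0 ≤ u 1)
    (hmono : ∀ i j : ℕ, 1 ≤ i → i ≤ j → j ≤ m → u i ≤ u j)
    (Λ : Finset ℤ) (hΛ : ∀ i ∈ Λ, -1 ≤ i ∧ i ≤ (m : ℤ))
    (lam0 : ℝ) (hlam0 : 0 ≤ lam0)
    (lam : ℤ → ℝ) (hlam : ∀ i ∈ Λ, 0 < lam i)
    (heq : ∀ j : ℕ, 1 ≤ j → j ≤ m →
      lam0 * u j + ∑ i ∈ Λ, lam i * uvecUp m i j = 1) :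
    ∃ p q : ℕ, p ≤ q ∧ q ≤ m ∧
      (∀ a b : ℕ, p + 1 ≤ a → a ≤ q → p + 1 ≤ b → b ≤ q → u a = u b) ∧
      (∀ i : ℤ, ((0 ≤ i ∧ i ≤ (p : ℤ) - 1) ∨ ((q : ℤ) + 1 ≤ i ∧ i ≤ (m : ℤ))) →
        i ∈ Λ) := by
  classical
  set A : ℤ → ℝ := fun i => if i ∈ Λ then lam i else 0 with hAdef
  have hAnn : ∀ i, 0 ≤ A i := by
    intro i
    simp only [hAdef]
    split_ifs with h
    · exact (hlam i h).le
    · exact le_refl 0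
  have hAmem : ∀ i : ℤ, A i ≠ 0 → i ∈ Λ := by
    intro i h
    by_contra hc
    exact h (by simp [hAdef, hc])
  -- the coordinate equations in difference form
  have heq' : ∀ j : ℕ, 1 ≤ j → j ≤ m →
      lam0 * u j + (A ((j : ℤ) - 1) - A (j : ℤ) - (if j = 1 then A (-1) else 0)) = 1 := by
    intro j hj1 hj2
    have h := heq j hj1 hj2
    have hterm : ∀ i ∈ Λ, lam i * uvecUp m i j =
        (if i = (j : ℤ) - 1 then lam i else 0) - (if i = (j : ℤ) then lam i else 0)
          - (if j = 1 then (if i = -1 then lam i else 0) else 0) := by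
      intro i hi
      obtain ⟨h1, h2⟩ := hΛ i hi
      unfold uvecUp
      split_ifs <;> first | ring1 | (exfalso; omega)
    rw [Finset.sum_congr rfl hterm, Finset.sum_sub_distrib, Finset.sum_sub_distrib,
      Finset.sum_ite_eq' Λ ((j : ℤ) - 1) lam, Finset.sum_ite_eq' Λ (j : ℤ) lam] at h
    by_cases hj : j = 1
    · simp only [hj, if_true, Finset.sum_ite_eq' Λ (-1 : ℤ) lam] at h ⊢
      exact h
    · simp only [hj, if_false, Finset.sum_const_zero] at h ⊢
      exact h
  have hd2 : ∀ j : ℕ, 2 ≤ j → j ≤ m →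
      A (j : ℤ) - A ((j : ℤ) - 1) = lam0 * u j - 1 := by
    intro j h2 hjm
    have h := heq' j (by omega) hjm
    rw [if_neg (by omega : j ≠ 1)] at h
    linarith
  have hd1 : lam0 * u 1 + (A 0 - A 1 - A (-1)) = 1 := by
    have h := heq' 1 le_rfl hm
    rw [if_pos rfl] at h
    norm_num at h
    convert h using 4 <;> norm_num
  -- increments are monotone
  have hmonod : ∀ j k : ℕ, 1 ≤ j → j ≤ k → k ≤ m →
      A (j : ℤ) - A ((j : ℤ) - 1) ≤ A (k : ℤ) - A ((k : ℤ) - 1) := by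
    intro j k hj hjk hkm
    have hc : lam0 * u j ≤ lam0 * u k :=
      mul_le_mul_of_nonneg_left (hmono j k hj hjk hkm) hlam0
    rcases eq_or_ne k 1 with rfl | hk1
    · have : j = 1 := by omega
      subst this
      exact le_rfl
    · have hdk := hd2 k (by omega) hkm
      rcases eq_or_ne j 1 with rfl | hj1
      · have h0 := hAnn (-1)
        have e1 : ((1 : ℕ) : ℤ) = 1 := by norm_num
        rw [e1]
        norm_num
        linarith
      · have hdj := hd2 j (by omega) (hjk.trans hkm)
        linarith
  by_cases hex : ∃ n : ℕ, n ≤ m ∧ A (n : ℤ) = 0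
  · -- there is a zero of A in [0, m]
    set p := Nat.find hex with hpdef
    have hpP : p ≤ m ∧ A (p : ℤ) = 0 := Nat.find_spec hex
    set q := Nat.findGreatest (fun n => A (n : ℤ) = 0) m with hqdef
    have hq : q ≤ m := Nat.findGreatest_le m
    have hqQ : A (q : ℤ) = 0 := by
      have h := Nat.findGreatest_spec (P := fun n : ℕ => A (n : ℤ) = 0) hpP.1 hpP.2
      simpa [hqdef] using h
    have hpq : p ≤ q := Nat.le_findGreatest (P := fun n : ℕ => A (n : ℤ) = 0) hpP.1 hpP.2
    -- increments are nonpositive on (p, q]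
    have hstep : ∀ n : ℕ, p + 1 ≤ n → n ≤ q → A (n : ℤ) - A ((n : ℤ) - 1) ≤ 0 := by
      intro n hn1 hn2
      by_contra hpos
      push_neg at hpos
      have hgrow : ∀ k : ℕ, n ≤ k → k ≤ q → A ((n : ℤ) - 1) < A (k : ℤ) := by
        intro k hk
        induction k, hk using Nat.le_induction with
        | base => intro _; linarith
        | succ k hk ih =>
          intro hkq
          have ihk := ih (by omega)
          have hd := hmonod n (k + 1) (by omega) (by omega) (by omega)
          have hcst : (((k + 1 : ℕ)) : ℤ) - 1 = (k : ℤ) := by push_cast; ring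
          rw [hcst] at hd
          linarith
      have h1 := hgrow q hn2 le_rfl
      have h2 := hAnn ((n : ℤ) - 1)
      linarith [hqQ]
    -- A vanishes on [p, q]
    have hzero : ∀ n : ℕ, p ≤ n → n ≤ q → A (n : ℤ) = 0 := by
      have hdec : ∀ n : ℕ, p ≤ n → n ≤ q → A (n : ℤ) ≤ 0 := by
        intro n hn
        induction n, hn using Nat.le_induction with
        | base => intro _; exact le_of_eq hpP.2
        | succ n hn ih =>
          intro hnq
          have h1 := hstep (n + 1) (by omega) hnq
          have h2 := ih (by omega)
          have hcst : (((n + 1 : ℕ)) : ℤ) - 1 = (n : ℤ) := by push_cast; ring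
          rw [hcst] at h1
          linarith
      exact fun n h1 h2 => le_antisymm (hdec n h1 h2) (hAnn _)
    have hc0 : ∀ n : ℕ, p + 1 ≤ n → n ≤ q → A (n : ℤ) - A ((n : ℤ) - 1) = 0 := by
      intro n h1 h2
      have ha := hzero n (by omega) h2
      have hb := hzero (n - 1) (by omega) (by omega)
      have hcst : ((n : ℤ) - 1) = (((n - 1 : ℕ)) : ℤ) := by omega
      rw [ha, hcst, hb]
      ring
    have key2 : ∀ n : ℕ, p + 1 ≤ n → n ≤ q → 2 ≤ n → lam0 * u n = 1 := by
      intro n h1 h2 h3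
      have ha := hd2 n h3 (by omega)
      have hb := hc0 n h1 h2
      linarith
    refine ⟨p, q, hpq, hq, ?_, ?_⟩
    · -- constancy of u on [p+1, q]
      have hsuff : ∀ a b : ℕ, p + 1 ≤ a → a ≤ b → b ≤ q → u a = u b := by
        intro a b ha1 hab hb2
        rcases eq_or_lt_of_le hab with rfl | hlt
        · rfl
        · have hub : lam0 * u b = 1 := key2 b (by omega) hb2 (by omega)
          have hl0 : 0 < lam0 := by
            rcases hlam0.lt_or_eq with h | h
            · exact h
            · rw [← h, zero_mul] at hub; norm_num at hub
          have hmab : u a ≤ u b := hmono a b (by omega) hab (by omega)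
          by_cases ha2' : 2 ≤ a
          · have hua := key2 a ha1 (by omega) ha2'
            exact mul_left_cancel₀ (ne_of_gt hl0) (hua.trans hub.symm)
          · have ha1' : a = 1 := by omega
            subst ha1'
            have h01 := hc0 1 (by omega) (by omega)
            have e1 : ((1 : ℕ) : ℤ) = 1 := by norm_num
            rw [e1] at h01
            norm_num at h01
            have h0 := hAnn (-1)
            have hge : 1 ≤ lam0 * u 1 := by linarith
            have hba : u b ≤ u 1 := by
              have : lam0 * u b ≤ lam0 * u 1 := by linarith
              exact (mul_le_mul_iff_right₀ hl0).mp this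
            exact le_antisymm hmab hba
      intro a b ha1 ha2 hb1 hb2
      rcases le_total a b with h | h
      · exact hsuff a b ha1 h hb2
      · exact (hsuff b a hb1 h ha2).symm
    · intro i hi
      rcases hi with ⟨hi0, hi1⟩ | ⟨hi0, hi1⟩
      · lift i to ℕ using hi0 with n
        have hnp : n < p := by omega
        have hmin := Nat.find_min hex hnp
        refine hAmem _ fun h => hmin ⟨by omega, h⟩
      · lift i to ℕ using (by omega : (0 : ℤ) ≤ i) with n
        have hnq : q < n := by omega
        have hnm : n ≤ m := by omega
        have h := Nat.findGreatest_is_greatest (P := fun n : ℕ => A (n : ℤ) = 0) hnq hnm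
        exact hAmem _ h
  · -- A never vanishes on [0, m] : take p = q = m
    push_neg at hex
    refine ⟨m, m, le_rfl, le_rfl, ?_, ?_⟩
    · intro a b ha hab _ _
      exact absurd (ha.trans hab) (by omega)
    · intro i hi
      rcases hi with ⟨hi0, hi1⟩ | ⟨hi0, hi1⟩
      · lift i to ℕ using hi0 with n
        exact hAmem _ (hex n (by omega))
      · exfalso; omega
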